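/- There exist functions f_1, f_2 : [0,1] → ℂ that are Hölder continuous with exponent 1/3 and functions F_1, F_2 ∈ L²([0,1]², Lebesgue measure) such that (f_1(x) − f_1(y)) F_1(x,y) + (f_2(x) − f_2(y)) F_2(x,y) = 1 for Lebesgue-almost every (x,y) ∈ [0,1]². -/

import Mathlib

open MeasureTheory
open scoped ENNReal

open MeasureTheory Set Filter
open scoped ENNReal Topology

noncomputable section
namespace HilbertAux

abbrev V : Type := ℝ × ℝ × ℝ

/-- The eight similarity maps of a 3D Hilbert curve. -/
def m : ℕ → V → V
  | 0, (x,y,z) => (x/2, z/2, y/2)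
  | 1, (x,y,z) => (x/2, (y+1)/2, z/2)
  | 2, (x,y,z) => (z/2, (x+1)/2, (y+1)/2)
  | 3, (x,y,z) => ((x+1)/2, (y+1)/2, (1-z)/2)
  | 4, (x,y,z) => ((x+1)/2, (1-y)/2, z/2)
  | 5, (x,y,z) => ((x+1)/2, (y+1)/2, (z+1)/2)
  | 6, (x,y,z) => ((x+1)/2, (1-z)/2, (2-y)/2)
  | _+7, (x,y,z) => ((1-z)/2, x/2, (2-y)/2)

def ept : V := (0, 0, 0)
def fpt : V := (0, 0, 1)

lemma chain0 : m 0 ept = ept := by norm_num [m, ept]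
lemma chain7 : m 7 fpt = fpt := by norm_num [m, fpt]
lemma chain (d : ℕ) (hd : d < 7) : m d fpt = m (d+1) ept := by
  interval_cases d <;> norm_num [m, ept, fpt]

lemma norm_def (v : V) : ‖v‖ = max |v.1| (max |v.2.1| |v.2.2|) := by
  rcases v with ⟨a, b, c⟩
  simp [Prod.norm_def, Real.norm_eq_abs]

lemma norm_le_iff {v : V} {r : ℝ} : ‖v‖ ≤ r ↔ |v.1| ≤ r ∧ |v.2.1| ≤ r ∧ |v.2.2| ≤ r := by
  rw [norm_def]
  simp [max_le_iff, and_assoc]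

/-- Each map halves (sup-norm) distances. -/
lemma m_half (d : ℕ) (u v : V) : ‖m d u - m d v‖ ≤ 2⁻¹ * ‖u - v‖ := by
  rcases u with ⟨a, b, c⟩; rcases v with ⟨a', b', c'⟩
  have h1 : |a - a'| ≤ ‖((a - a', b - b', c - c') : V)‖ := by
    rw [norm_def]; exact le_max_of_le_left (by simp)
  have h2 : |b - b'| ≤ ‖((a - a', b - b', c - c') : V)‖ := by
    rw [norm_def]; exact le_max_of_le_right (le_max_of_le_left (by simp))
  have h3 : |c - c'| ≤ ‖((a - a', b - b', c - c') : V)‖ := by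
    rw [norm_def]; exact le_max_of_le_right (le_max_of_le_right (by simp))
  obtain ⟨l1, r1⟩ := abs_le.mp h1
  obtain ⟨l2, r2⟩ := abs_le.mp h2
  obtain ⟨l3, r3⟩ := abs_le.mp h3
  rcases d with _|_|_|_|_|_|_|d <;>
    (simp only [m, Prod.mk_sub_mk]
     rw [norm_le_iff]
     dsimp only
     refine ⟨abs_le.mpr ⟨?_, ?_⟩, abs_le.mpr ⟨?_, ?_⟩, abs_le.mpr ⟨?_, ?_⟩⟩ <;> linarith)

lemma m_inj (d : ℕ) (u v : V) (h : m d u = m d v) : u = v := by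
  rcases u with ⟨a, b, c⟩; rcases v with ⟨a', b', c'⟩
  rcases d with _|_|_|_|_|_|_|d <;>
    (simp only [m, Prod.mk.injEq] at h
     obtain ⟨e1, e2, e3⟩ := h
     refine Prod.ext ?_ (Prod.ext ?_ ?_) <;> simp <;> linarith)

def inK (v : V) : Prop := v.1 ∈ Icc (0:ℝ) 1 ∧ v.2.1 ∈ Icc (0:ℝ) 1 ∧ v.2.2 ∈ Icc (0:ℝ) 1

lemma ept_inK : inK ept := by norm_num [inK, ept]
lemma fpt_inK : inK fpt := by norm_num [inK, fpt]

lemma m_mapsK (d : ℕ) {v : V} (hv : inK v) : inK (m d v) := by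
  rcases v with ⟨a, b, c⟩
  obtain ⟨⟨ha0, ha1⟩, ⟨hb0, hb1⟩, ⟨hc0, hc1⟩⟩ := hv
  dsimp only at ha0 ha1 hb0 hb1 hc0 hc1
  rcases d with _|_|_|_|_|_|_|d <;>
    (simp only [m, inK, mem_Icc]
     refine ⟨⟨?_, ?_⟩, ⟨?_, ?_⟩, ⟨?_, ?_⟩⟩ <;> linarith)

lemma diam_K {u v : V} (hu : inK u) (hv : inK v) : ‖u - v‖ ≤ 1 := by
  rcases u with ⟨a, b, c⟩; rcases v with ⟨a', b', c'⟩
  obtain ⟨⟨ha0, ha1⟩, ⟨hb0, hb1⟩, ⟨hc0, hc1⟩⟩ := hu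
  obtain ⟨⟨ha0', ha1'⟩, ⟨hb0', hb1'⟩, ⟨hc0', hc1'⟩⟩ := hv
  dsimp only at ha0 ha1 hb0 hb1 hc0 hc1 ha0' ha1' hb0' hb1' hc0' hc1'
  simp only [Prod.mk_sub_mk]
  rw [norm_le_iff]
  dsimp only
  refine ⟨abs_le.mpr ⟨?_, ?_⟩, abs_le.mpr ⟨?_, ?_⟩, abs_le.mpr ⟨?_, ?_⟩⟩ <;> linarith

def inO (v : V) : Prop := v.1 ∈ Ioo (0:ℝ) 1 ∧ v.2.1 ∈ Ioo (0:ℝ) 1 ∧ v.2.2 ∈ Ioo (0:ℝ) 1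

lemma m_mapsO (d : ℕ) {v : V} (hv : inO v) : inO (m d v) := by
  rcases v with ⟨a, b, c⟩
  obtain ⟨⟨ha0, ha1⟩, ⟨hb0, hb1⟩, ⟨hc0, hc1⟩⟩ := hv
  dsimp only at ha0 ha1 hb0 hb1 hc0 hc1
  rcases d with _|_|_|_|_|_|_|d <;>
    (simp only [m, inO, mem_Ioo]
     refine ⟨⟨?_, ?_⟩, ⟨?_, ?_⟩, ⟨?_, ?_⟩⟩ <;> linarith)

/-- Distinct maps send interior points into distinct octants. -/
lemma m_oct_inj {d₁ d₂ : ℕ} (h₁ : d₁ ≤ 7) (h₂ : d₂ ≤ 7) {u v : V}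
    (hu : inO u) (hv : inO v) (h : m d₁ u = m d₂ v) : d₁ = d₂ := by
  rcases u with ⟨a, b, c⟩; rcases v with ⟨a', b', c'⟩
  obtain ⟨⟨ha0, ha1⟩, ⟨hb0, hb1⟩, ⟨hc0, hc1⟩⟩ := hu
  obtain ⟨⟨ha0', ha1'⟩, ⟨hb0', hb1'⟩, ⟨hc0', hc1'⟩⟩ := hv
  dsimp only at ha0 ha1 hb0 hb1 hc0 hc1 ha0' ha1' hb0' hb1' hc0' hc1'
  interval_cases d₁ <;> interval_cases d₂ <;>
    first
      | rfl
      | (exfalso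
         simp only [m, Prod.mk.injEq] at h
         obtain ⟨e1, e2, e3⟩ := h
         linarith)

end HilbertAux

-- PART 2
namespace HilbertAux
open MeasureTheory Set Filter
open scoped ENNReal Topology

/-- first octal digit (capped at 7, so that `digN 1 = 7`). -/
def digN (x : ℝ) : ℕ := (min 7 ⌊8 * x⌋).toNat

/-- the shift map. -/
def sh (x : ℝ) : ℝ := 8 * x - digN x

lemma digN_le (x : ℝ) : digN x ≤ 7 := by unfold digN; omega

lemma digN_eq_floor {x : ℝ} (h0 : 0 ≤ x) (h1 : x < 1) : (digN x : ℤ) = ⌊8 * x⌋ := by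
  have hf0 : (0:ℤ) ≤ ⌊8 * x⌋ := Int.floor_nonneg.mpr (by linarith)
  have hf7 : ⌊8 * x⌋ < 8 := by exact_mod_cast Int.floor_lt.mpr (by norm_num; linarith)
  unfold digN; omega

lemma sh_mem_Ico {x : ℝ} (hx : x ∈ Ico (0:ℝ) 1) : sh x ∈ Ico (0:ℝ) 1 := by
  obtain ⟨h0, h1⟩ := hx
  have hd : (digN x : ℝ) = (⌊8 * x⌋ : ℤ) := by exact_mod_cast digN_eq_floor h0 h1
  constructor
  · rw [sh, hd]; linarith [Int.floor_le (8 * x)]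
  · rw [sh, hd]; linarith [Int.lt_floor_add_one (8 * x)]

lemma digN_one : digN 1 = 7 := by norm_num [digN]; rfl

lemma sh_one : sh 1 = 1 := by norm_num [sh, digN_one]

lemma sh_mem_Icc {x : ℝ} (hx : x ∈ Icc (0:ℝ) 1) : sh x ∈ Icc (0:ℝ) 1 := by
  rcases eq_or_lt_of_le hx.2 with h | h
  · rw [h, sh_one]; norm_num
  · exact Ico_subset_Icc_self (sh_mem_Ico ⟨hx.1, h⟩)

lemma digN_seven {x : ℝ} (hx : x ∈ Icc (7/8 : ℝ) 1) : digN x = 7 := by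
  have h7 : (7:ℤ) ≤ ⌊8 * x⌋ := Int.le_floor.mpr (by push_cast; linarith [hx.1])
  unfold digN; omega

lemma sh_seven {x : ℝ} (hx : x ∈ Icc (7/8 : ℝ) 1) : sh x = 8 * x - 7 := by
  rw [sh, digN_seven hx]; norm_num

lemma digN_mono {x y : ℝ} (h0 : 0 ≤ x) (hxy : x ≤ y) : digN x ≤ digN y := by
  have := Int.floor_le_floor (R := ℝ) (mul_le_mul_of_nonneg_left hxy (by norm_num : (0:ℝ) ≤ 8))
  unfold digN; omega

lemma digN_adj {x y : ℝ} (h0 : 0 ≤ x) (hxy : x ≤ y) (h : 8 * y ≤ 8 * x + 1) :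
    digN y ≤ digN x + 1 := by
  have h1 : ⌊8 * y⌋ ≤ ⌊8 * x⌋ + 1 := by
    have : ⌊8 * y⌋ ≤ ⌊8 * x + 1⌋ := Int.floor_le_floor h
    simpa [Int.floor_add_one] using this
  have hf0 : (0:ℤ) ≤ ⌊8 * x⌋ := Int.floor_nonneg.mpr (by linarith)
  unfold digN; omega

/-- Iterates converging to the Hilbert curve. -/
def Phi : ℕ → ℝ → V
  | 0, _ => ept
  | k+1, x => m (digN x) (Phi k (sh x))

lemma Phi_memK (k : ℕ) (x : ℝ) : inK (Phi k x) := by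
  induction k generalizing x with
  | zero => exact ept_inK
  | succ k ih => exact m_mapsK _ (ih (sh x))

lemma Phi_succ_dist (k : ℕ) (x : ℝ) :
    ‖Phi (k+1) x - Phi k x‖ ≤ (2⁻¹ : ℝ) ^ k := by
  induction k generalizing x with
  | zero => simpa [Phi] using diam_K (Phi_memK 1 x) ept_inK
  | succ k ih =>
      calc ‖Phi (k+2) x - Phi (k+1) x‖
          ≤ 2⁻¹ * ‖Phi (k+1) (sh x) - Phi k (sh x)‖ := m_half _ _ _
        _ ≤ 2⁻¹ * (2⁻¹ : ℝ) ^ k := by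
            have := ih (sh x); nlinarith
        _ = (2⁻¹ : ℝ) ^ (k+1) := by ring

lemma Phi_cauchy (x : ℝ) : CauchySeq (fun k => Phi k x) := by
  apply cauchySeq_of_le_geometric 2⁻¹ 1 (by norm_num)
  intro n
  rw [dist_eq_norm, norm_sub_rev, one_mul]
  exact Phi_succ_dist n x

/-- The 3D Hilbert curve. -/
def hfun (x : ℝ) : V := (cauchySeq_tendsto_of_complete (Phi_cauchy x)).choose

lemma hfun_tendsto (x : ℝ) : Tendsto (fun k => Phi k x) atTop (𝓝 (hfun x)) :=
  (cauchySeq_tendsto_of_complete (Phi_cauchy x)).choose_spec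

lemma m_lipschitz (d : ℕ) : LipschitzWith 2⁻¹ (m d) := by
  apply LipschitzWith.of_dist_le_mul
  intro u v
  rw [dist_eq_norm, dist_eq_norm]
  simpa using m_half d u v

lemma hfun_rec (x : ℝ) : hfun x = m (digN x) (hfun (sh x)) := by
  have h1 : Tendsto (fun k => Phi (k+1) x) atTop (𝓝 (hfun x)) :=
    (hfun_tendsto x).comp (tendsto_add_atTop_nat 1)
  have h2 : Tendsto (fun k => m (digN x) (Phi k (sh x))) atTop
      (𝓝 (m (digN x) (hfun (sh x)))) :=
    ((m_lipschitz (digN x)).continuous.tendsto _).comp (hfun_tendsto (sh x))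
  exact tendsto_nhds_unique h1 h2

lemma isClosed_K : IsClosed {v : V | inK v} := by
  have : {v : V | inK v} =
      ((fun v : V => v.1) ⁻¹' Icc 0 1) ∩ (((fun v : V => v.2.1) ⁻¹' Icc 0 1) ∩
        ((fun v : V => v.2.2) ⁻¹' Icc 0 1)) := by
    ext v; simp [inK, and_assoc]
  rw [this]
  exact (isClosed_Icc.preimage continuous_fst).inter
    ((isClosed_Icc.preimage (continuous_fst.comp continuous_snd)).inter
      (isClosed_Icc.preimage (continuous_snd.comp continuous_snd)))

lemma hfun_memK (x : ℝ) : inK (hfun x) :=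
  isClosed_K.mem_of_tendsto (hfun_tendsto x) (Filter.Eventually.of_forall fun k => Phi_memK k x)

lemma fixed_point_unique {d : ℕ} {u w : V} (hw : m d w = w) (hu : m d u = u) : u = w := by
  have h := m_half d u w
  rw [hu, hw] at h
  have : ‖u - w‖ = 0 := by nlinarith [norm_nonneg (u - w)]
  simpa [sub_eq_zero] using norm_eq_zero.mp this

lemma digN_zero : digN 0 = 0 := by norm_num [digN]
lemma sh_zero : sh 0 = 0 := by norm_num [sh, digN_zero]

lemma hfun_zero : hfun 0 = ept := by
  have h : m 0 (hfun 0) = hfun 0 := by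
    conv_rhs => rw [hfun_rec 0]
    rw [digN_zero, sh_zero]
  exact fixed_point_unique chain0 h

lemma hfun_one : hfun 1 = fpt := by
  have h : m 7 (hfun 1) = hfun 1 := by
    conv_rhs => rw [hfun_rec 1]
    rw [digN_one, sh_one]
  exact fixed_point_unique chain7 h

end HilbertAux

-- PART 3 : Hölder continuity
namespace HilbertAux
open MeasureTheory Set Filter
open scoped ENNReal Topology

lemma digN_zero' {u : ℝ} (h0 : 0 ≤ u) (h1 : u < 8⁻¹) : digN u = 0 ∧ sh u = 8 * u := by
  have : ⌊8 * u⌋ = 0 := Int.floor_eq_zero_iff.mpr ⟨by linarith, by linarith⟩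
  constructor
  · unfold digN; omega
  · have hd : digN u = 0 := by unfold digN; omega
    simp [sh, hd]

lemma near_e : ∀ k : ℕ, ∀ u : ℝ, u ∈ Icc 0 ((8⁻¹:ℝ)^k) →
    ‖hfun u - ept‖ ≤ (2⁻¹:ℝ)^k := by
  intro k
  induction k with
  | zero =>
      intro u hu
      simpa using diam_K (hfun_memK u) ept_inK
  | succ k ih =>
      intro u hu
      by_cases h : u < 8⁻¹
      · obtain ⟨hd, hs⟩ := digN_zero' hu.1 h
        have h8u : 8 * u ∈ Icc (0:ℝ) ((8⁻¹:ℝ)^k) := by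
          constructor
          · linarith [hu.1]
          · have := hu.2
            have h8 : (8⁻¹:ℝ)^(k+1) * 8 = (8⁻¹:ℝ)^k := by
              rw [pow_succ]; ring
            nlinarith
        calc ‖hfun u - ept‖ = ‖m 0 (hfun (8*u)) - m 0 ept‖ := by
              conv_lhs => rw [hfun_rec u, hd, hs, ← chain0]
          _ ≤ 2⁻¹ * ‖hfun (8*u) - ept‖ := m_half _ _ _
          _ ≤ 2⁻¹ * (2⁻¹:ℝ)^k := by nlinarith [ih _ h8u, norm_nonneg (hfun (8*u) - ept)]
          _ = (2⁻¹:ℝ)^(k+1) := by ring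
      · -- u = 8⁻¹ and k = 0
        have h1 : (8⁻¹:ℝ)^(k+1) ≤ 8⁻¹ := pow_le_of_le_one (by norm_num) (by norm_num)
            (by omega)
        have hu8 : u = 8⁻¹ := le_antisymm (hu.2.trans h1) (not_lt.mp h)
        have hk0 : k = 0 := by
          by_contra hkne
          have h2 : (8⁻¹:ℝ)^(k+1) ≤ (8⁻¹:ℝ)^2 :=
            pow_le_pow_of_le_one (by norm_num) (by norm_num) (by omega)
          have := hu.2
          rw [hu8] at this
          norm_num at h2
          linarith
        subst hk0
        have hd : digN u = 1 := by rw [hu8]; first | (norm_num [digN]; rfl) | norm_num [digN]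
        have hs : sh u = 0 := by rw [sh, hd, hu8]; norm_num
        calc ‖hfun u - ept‖ = ‖m 0 fpt - m 0 ept‖ := by
              rw [hfun_rec u, hd, hs, hfun_zero, ← chain 0 (by norm_num), chain0]
          _ ≤ 2⁻¹ * ‖fpt - ept‖ := m_half _ _ _
          _ ≤ (2⁻¹:ℝ)^(0+1) := by
              have h := diam_K fpt_inK ept_inK
              simp only [zero_add, pow_one]
              linarith

lemma near_f : ∀ k : ℕ, ∀ u : ℝ, u ∈ Icc (1 - (8⁻¹:ℝ)^k) 1 →
    ‖hfun u - fpt‖ ≤ (2⁻¹:ℝ)^k := by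
  intro k
  induction k with
  | zero =>
      intro u hu
      simpa using diam_K (hfun_memK u) fpt_inK
  | succ k ih =>
      intro u hu
      have h1 : (8⁻¹:ℝ)^(k+1) ≤ 8⁻¹ := pow_le_of_le_one (by norm_num) (by norm_num)
          (by omega)
      have hu78 : u ∈ Icc (7/8 : ℝ) 1 := ⟨by linarith [hu.1], hu.2⟩
      have hd := digN_seven hu78
      have hs := sh_seven hu78
      have hmem : sh u ∈ Icc (1 - (8⁻¹:ℝ)^k) 1 := by
        rw [hs]
        constructor
        · have h8 : (8⁻¹:ℝ)^(k+1) * 8 = (8⁻¹:ℝ)^k := by rw [pow_succ]; ring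
          nlinarith [hu.1]
        · linarith [hu.2]
      calc ‖hfun u - fpt‖ = ‖m 7 (hfun (sh u)) - m 7 fpt‖ := by
            conv_lhs => rw [hfun_rec u, hd, ← chain7]
        _ ≤ 2⁻¹ * ‖hfun (sh u) - fpt‖ := m_half _ _ _
        _ ≤ 2⁻¹ * (2⁻¹:ℝ)^k := by nlinarith [ih _ hmem, norm_nonneg (hfun (sh u) - fpt)]
        _ = (2⁻¹:ℝ)^(k+1) := by ring

lemma digN_le_real {y : ℝ} (h0 : 0 ≤ y) : (digN y : ℝ) ≤ 8 * y := by
  have h1 : (digN y : ℤ) ≤ ⌊8 * y⌋ := by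
    have : (0:ℤ) ≤ ⌊8*y⌋ := Int.floor_nonneg.mpr (by linarith)
    unfold digN; omega
  calc (digN y : ℝ) ≤ (⌊8*y⌋ : ℤ) := by exact_mod_cast h1
    _ ≤ 8 * y := Int.floor_le _

lemma lt_digN_succ {x : ℝ} (h : digN x ≤ 6) : 8 * x < digN x + 1 := by
  have h2 : ⌊8*x⌋ ≤ (digN x : ℤ) := by unfold digN at *; omega
  have h3 : ((⌊8*x⌋ : ℤ) : ℝ) ≤ (digN x : ℝ) := by exact_mod_cast h2
  linarith [Int.lt_floor_add_one (8*x)]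

lemma holder_core : ∀ k : ℕ, ∀ x y : ℝ, x ∈ Icc (0:ℝ) 1 → y ∈ Icc (0:ℝ) 1 →
    |x - y| ≤ (8⁻¹:ℝ)^k → ‖hfun x - hfun y‖ ≤ 2 * (2⁻¹:ℝ)^k := by
  intro k
  induction k with
  | zero =>
      intro x y hx hy _
      have := diam_K (hfun_memK x) (hfun_memK y)
      norm_num; linarith
  | succ k ih =>
      have key : ∀ x y : ℝ, x ∈ Icc (0:ℝ) 1 → y ∈ Icc (0:ℝ) 1 → x ≤ y →
          y - x ≤ (8⁻¹:ℝ)^(k+1) → ‖hfun x - hfun y‖ ≤ 2 * (2⁻¹:ℝ)^(k+1) := by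
        intro x y hx hy hxy hd
        have h18 : (8⁻¹:ℝ)^(k+1) ≤ 8⁻¹ := pow_le_of_le_one (by norm_num) (by norm_num)
            (by omega)
        have h8 : (8⁻¹:ℝ)^(k+1) * 8 = (8⁻¹:ℝ)^k := by rw [pow_succ]; ring
        have hab : digN x ≤ digN y := digN_mono hx.1 hxy
        have hba : digN y ≤ digN x + 1 := digN_adj hx.1 hxy (by nlinarith)
        rcases eq_or_lt_of_le hab with hcase | hcase
        · -- same digit
          have hshx := sh_mem_Icc hx
          have hshy := sh_mem_Icc hy
          have hsub : sh x - sh y = 8 * x - 8 * y := by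
            rw [sh, sh, hcase]; ring
          have hshd : |sh x - sh y| ≤ (8⁻¹:ℝ)^k := by
            rw [hsub, abs_le]
            constructor <;> nlinarith
          calc ‖hfun x - hfun y‖ = ‖m (digN x) (hfun (sh x)) - m (digN x) (hfun (sh y))‖ := by
                rw [hfun_rec x, hfun_rec y, hcase]
            _ ≤ 2⁻¹ * ‖hfun (sh x) - hfun (sh y)‖ := m_half _ _ _
            _ ≤ 2⁻¹ * (2 * (2⁻¹:ℝ)^k) := by
                nlinarith [ih (sh x) (sh y) hshx hshy hshd,
                  norm_nonneg (hfun (sh x) - hfun (sh y))]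
            _ = 2 * (2⁻¹:ℝ)^(k+1) := by ring
        · -- adjacent digits
          have hb : digN y = digN x + 1 := by omega
          have ha6 : digN x ≤ 6 := by have := digN_le y; omega
          have hxlt : 8 * x < digN x + 1 := lt_digN_succ ha6
          have hyge : (digN x : ℝ) + 1 ≤ 8 * y := by
            have := digN_le_real hy.1
            rw [hb] at this
            push_cast at this ⊢
            linarith
          -- sh x is near 1
          have hshx1 : sh x ∈ Icc (1 - (8⁻¹:ℝ)^k) 1 := by
            have hm := sh_mem_Icc hx
            constructor
            · rw [sh]; nlinarith
            · exact hm.2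
          -- sh y is near 0
          have hshy0 : sh y ∈ Icc (0:ℝ) ((8⁻¹:ℝ)^k) := by
            have hm := sh_mem_Icc hy
            constructor
            · exact hm.1
            · rw [sh, hb]; push_cast; nlinarith
          have hchain : m (digN x) fpt = m (digN x + 1) ept := chain _ (by omega)
          calc ‖hfun x - hfun y‖
              = ‖(m (digN x) (hfun (sh x)) - m (digN x) fpt)
                  + (m (digN x + 1) ept - m (digN x + 1) (hfun (sh y)))‖ := by
                rw [hfun_rec x, hfun_rec y, hb, ← hchain]; ring_nf
            _ ≤ ‖m (digN x) (hfun (sh x)) - m (digN x) fpt‖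
                  + ‖m (digN x + 1) ept - m (digN x + 1) (hfun (sh y))‖ := norm_add_le _ _
            _ ≤ 2⁻¹ * ‖hfun (sh x) - fpt‖ + 2⁻¹ * ‖ept - hfun (sh y)‖ := by
                have := m_half (digN x) (hfun (sh x)) fpt
                have := m_half (digN x + 1) ept (hfun (sh y))
                linarith
            _ ≤ 2⁻¹ * (2⁻¹:ℝ)^k + 2⁻¹ * (2⁻¹:ℝ)^k := by
                have h1 := near_f k (sh x) hshx1
                have h2 := near_e k (sh y) hshy0
                rw [norm_sub_rev] at h2
                linarith
            _ = 2 * (2⁻¹:ℝ)^(k+1) := by ring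
      intro x y hx hy hd
      rcases le_total x y with hxy | hxy
      · exact key x y hx hy hxy (by rw [abs_le] at hd; linarith [hd.1])
      · rw [norm_sub_rev]
        exact key y x hy hx hxy (by rw [abs_le] at hd; linarith [hd.2])

/-- Global Hölder-1/3 bound for the curve. -/
lemma hfun_holder {x y : ℝ} (hx : x ∈ Icc (0:ℝ) 1) (hy : y ∈ Icc (0:ℝ) 1) :
    ‖hfun x - hfun y‖ ≤ 4 * |x - y| ^ ((1:ℝ)/3) := by
  rcases eq_or_ne x y with rfl | hne
  · simp
  have ht0 : 0 < |x - y| := abs_pos.mpr (sub_ne_zero.mpr hne)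
  have ht1 : |x - y| ≤ 1 := by
    rw [abs_le]
    constructor <;> [linarith [hx.1, hy.2]; linarith [hx.2, hy.1]]
  have hex : ∃ n : ℕ, (8⁻¹:ℝ)^n < |x - y| := exists_pow_lt_of_lt_one ht0 (by norm_num)
  classical
  set n₀ := Nat.find hex with hn₀
  have hfind : (8⁻¹:ℝ)^n₀ < |x - y| := Nat.find_spec hex
  have hn₀pos : n₀ ≠ 0 := by
    intro h
    rw [h] at hfind
    simp at hfind
    linarith
  obtain ⟨k, hk⟩ : ∃ k, n₀ = k + 1 := ⟨n₀ - 1, by omega⟩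
  have hnot : ¬ ((8⁻¹:ℝ)^k < |x - y|) := by
    rw [hn₀] at hk
    exact Nat.find_min hex (by omega)
  have hle : |x - y| ≤ (8⁻¹:ℝ)^k := not_lt.mp hnot
  have hcore := holder_core k x y hx hy hle
  -- now relate (2⁻¹)^k to |x-y|^(1/3)
  set s : ℝ := (2⁻¹:ℝ)^k with hs
  have hs0 : 0 < s := pow_pos (by norm_num) k
  have hcube : (8⁻¹:ℝ)^(k+1) = (s/2)^3 := by
    have hsd : s/2 = (2⁻¹:ℝ)^(k+1) := by rw [hs, pow_succ]; ring
    rw [hsd, show (8⁻¹:ℝ) = (2⁻¹:ℝ)^3 by norm_num, ← pow_mul, ← pow_mul,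
      mul_comm 3 (k+1)]
  have hlt : (s/2)^3 < |x - y| := by rw [← hcube, ← hk]; exact hfind
  have hrt : s/2 < |x - y| ^ ((1:ℝ)/3) := by
    have h1 : ((s/2)^3 : ℝ) ^ ((1:ℝ)/3) < |x - y| ^ ((1:ℝ)/3) :=
      Real.rpow_lt_rpow (by positivity) hlt (by norm_num)
    calc s/2 = ((s/2)^3 : ℝ) ^ ((1:ℝ)/3) := by
          rw [← Real.rpow_natCast (s/2) 3, ← Real.rpow_mul (by positivity)]
          norm_num
      _ < _ := h1
  calc ‖hfun x - hfun y‖ ≤ 2 * s := hcore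
    _ ≤ 4 * (|x - y| ^ ((1:ℝ)/3)) := by linarith

end HilbertAux

-- PART 4 : centers, injectivity, counting
namespace HilbertAux
open MeasureTheory Set Filter
open scoped ENNReal Topology

def ctr0 : V := (2⁻¹, 2⁻¹, 2⁻¹)

def nFun (k : ℕ) (y : ℝ) : ℕ := (⌊(8:ℝ)^k * y⌋).toNat

def ctrN : ℕ → ℕ → V
  | 0, _ => ctr0
  | k+1, n => m (n / 8^k) (ctrN k (n % 8^k))

lemma nFun_lt {k : ℕ} {y : ℝ} (hy : y ∈ Ico (0:ℝ) 1) : nFun k y < 8^k := by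
  have h1 : ⌊(8:ℝ)^k * y⌋ < (8:ℕ)^k := by
    rw [Int.floor_lt]
    push_cast
    nlinarith [pow_pos (show (0:ℝ) < 8 by norm_num) k, hy.2, hy.1]
  unfold nFun
  rw [Int.toNat_lt' (pow_pos (by norm_num) k)]
  exact_mod_cast h1

lemma nFun_rec {k : ℕ} {y : ℝ} (hy : y ∈ Ico (0:ℝ) 1) :
    nFun (k+1) y = 8^k * digN y + nFun k (sh y) := by
  have hd : (digN y : ℝ) = (⌊8 * y⌋ : ℤ) := by exact_mod_cast digN_eq_floor hy.1 hy.2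
  have hsplit : (8:ℝ)^(k+1) * y = ((8^k * digN y : ℕ) : ℤ) + (8:ℝ)^k * sh y := by
    push_cast
    rw [sh, hd]
    push_cast
    ring
  have hfl : ⌊(8:ℝ)^(k+1) * y⌋ = (8^k * digN y : ℕ) + ⌊(8:ℝ)^k * sh y⌋ := by
    rw [hsplit, add_comm, Int.floor_add_intCast, add_comm]
  have hnn : (0:ℤ) ≤ ⌊(8:ℝ)^k * sh y⌋ := by
    apply Int.floor_nonneg.mpr
    have := (sh_mem_Ico hy).1
    positivity
  unfold nFun
  generalize hA : 8^k * digN y = A at hfl ⊢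
  omega

lemma nFun_bounds {k : ℕ} {y : ℝ} (hy : y ∈ Ico (0:ℝ) 1) :
    (nFun k y : ℝ) / 8^k ≤ y ∧ y ≤ ((nFun k y : ℝ) + 1) / 8^k := by
  have hp : (0:ℝ) < (8:ℝ)^k := by positivity
  have h0 : (0:ℤ) ≤ ⌊(8:ℝ)^k * y⌋ := Int.floor_nonneg.mpr (by nlinarith [hy.1])
  have hc : (nFun k y : ℝ) = (⌊(8:ℝ)^k * y⌋ : ℤ) := by
    unfold nFun
    exact_mod_cast Int.toNat_of_nonneg h0
  constructor
  · rw [div_le_iff₀ hp, hc]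
    linarith [Int.floor_le ((8:ℝ)^k * y)]
  · rw [le_div_iff₀ hp, hc]
    linarith [Int.lt_floor_add_one ((8:ℝ)^k * y)]

lemma diam_half {v : V} (hv : inK v) : ‖v - ctr0‖ ≤ 2⁻¹ := by
  rcases v with ⟨a, b, c⟩
  obtain ⟨⟨ha0, ha1⟩, ⟨hb0, hb1⟩, ⟨hc0, hc1⟩⟩ := hv
  dsimp only at ha0 ha1 hb0 hb1 hc0 hc1
  simp only [ctr0, Prod.mk_sub_mk]
  rw [norm_le_iff]
  refine ⟨abs_le.mpr ⟨?_, ?_⟩, abs_le.mpr ⟨?_, ?_⟩, abs_le.mpr ⟨?_, ?_⟩⟩ <;> norm_num <;> linarith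

lemma ctr_ball : ∀ (k : ℕ), ∀ y ∈ Ico (0:ℝ) 1,
    ‖hfun y - ctrN k (nFun k y)‖ ≤ (2⁻¹:ℝ)^(k+1) := by
  intro k
  induction k with
  | zero =>
      intro y hy
      have h0 : nFun 0 y = 0 := by
        have := nFun_lt (k := 0) hy; omega
      rw [h0]
      simpa [ctrN] using diam_half (hfun_memK y)
  | succ k ih =>
      intro y hy
      have hr := nFun_rec (k := k) hy
      have hlt : nFun k (sh y) < 8^k := nFun_lt (sh_mem_Ico hy)
      have hdiv : (8^k * digN y + nFun k (sh y)) / 8^k = digN y := by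
        rw [Nat.mul_add_div (pow_pos (by norm_num) k)]
        simp [Nat.div_eq_of_lt hlt]
      have hmod : (8^k * digN y + nFun k (sh y)) % 8^k = nFun k (sh y) := by
        rw [Nat.mul_add_mod]
        exact Nat.mod_eq_of_lt hlt
      calc ‖hfun y - ctrN (k+1) (nFun (k+1) y)‖
          = ‖m (digN y) (hfun (sh y)) - m (digN y) (ctrN k (nFun k (sh y)))‖ := by
            rw [hr]
            show ‖hfun y - m ((8^k * digN y + nFun k (sh y)) / 8^k)
                (ctrN k ((8^k * digN y + nFun k (sh y)) % 8^k))‖ = _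
            rw [hdiv, hmod, ← hfun_rec]
        _ ≤ 2⁻¹ * ‖hfun (sh y) - ctrN k (nFun k (sh y))‖ := m_half _ _ _
        _ ≤ 2⁻¹ * (2⁻¹:ℝ)^(k+1) := by
            nlinarith [ih (sh y) (sh_mem_Ico hy), norm_nonneg (hfun (sh y) - ctrN k (nFun k (sh y)))]
        _ = (2⁻¹:ℝ)^(k+2) := by ring

lemma ctr0_inO : inO ctr0 := by norm_num [inO, ctr0]

lemma ctrN_inO : ∀ k n, inO (ctrN k n) := by
  intro k
  induction k with
  | zero => intro n; exact ctr0_inO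
  | succ k ih => intro n; exact m_mapsO _ (ih _)

lemma div_lt8 {k n : ℕ} (h : n < 8^(k+1)) : n / 8^k ≤ 7 := by
  have := Nat.div_lt_iff_lt_mul (pow_pos (show 0 < 8 by norm_num) k) (x := n) (y := 8)
  rw [pow_succ] at h
  omega

lemma ctrN_inj : ∀ k n₁ n₂, n₁ < 8^k → n₂ < 8^k → ctrN k n₁ = ctrN k n₂ → n₁ = n₂ := by
  intro k
  induction k with
  | zero => intro n₁ n₂ h₁ h₂ _; omega
  | succ k ih =>
      intro n₁ n₂ h₁ h₂ h
      have hd : n₁ / 8^k = n₂ / 8^k := by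
        apply m_oct_inj (div_lt8 h₁) (div_lt8 h₂) (ctrN_inO _ _) (ctrN_inO _ _) h
      have hmodlt₁ : n₁ % 8^k < 8^k := Nat.mod_lt _ (pow_pos (by norm_num) k)
      have hmodlt₂ : n₂ % 8^k < 8^k := Nat.mod_lt _ (pow_pos (by norm_num) k)
      have h' : m (n₁ / 8^k) (ctrN k (n₁ % 8^k)) = m (n₂ / 8^k) (ctrN k (n₂ % 8^k)) := h
      rw [← hd] at h'
      have hm' : ctrN k (n₁ % 8^k) = ctrN k (n₂ % 8^k) := m_inj _ _ _ h'
      have hmm := ih _ _ hmodlt₁ hmodlt₂ hm'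
      calc n₁ = 8^k * (n₁ / 8^k) + n₁ % 8^k := (Nat.div_add_mod _ _).symm
        _ = 8^k * (n₂ / 8^k) + n₂ % 8^k := by rw [hd, hmm]
        _ = n₂ := Nat.div_add_mod _ _

/-- integer-scaled centers -/
def mZ : ℕ → ℤ → ℤ×ℤ×ℤ → ℤ×ℤ×ℤ
  | 0, _, (a,b,c) => (a, c, b)
  | 1, T, (a,b,c) => (a, b+T, c)
  | 2, T, (a,b,c) => (c, a+T, b+T)
  | 3, T, (a,b,c) => (a+T, b+T, T-c)
  | 4, T, (a,b,c) => (a+T, T-b, c)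
  | 5, T, (a,b,c) => (a+T, b+T, c+T)
  | 6, T, (a,b,c) => (a+T, T-c, 2*T-b)
  | _+7, T, (a,b,c) => (T-c, a, 2*T-b)

def ictr : ℕ → ℕ → ℤ×ℤ×ℤ
  | 0, _ => (1,1,1)
  | k+1, n => mZ (n / 8^k) (2^(k+1)) (ictr k (n % 8^k))

def castV (w : ℤ×ℤ×ℤ) (k : ℕ) : V :=
  (((w.1 : ℝ)) / 2^(k+1), ((w.2.1 : ℝ)) / 2^(k+1), ((w.2.2 : ℝ)) / 2^(k+1))

lemma m_scale (d : ℕ) (w : ℤ×ℤ×ℤ) (k : ℕ) :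
    m d (castV w k) = castV (mZ d (2^(k+1)) w) (k+1) := by
  rcases w with ⟨a, b, c⟩
  have h2 : ((2:ℝ))^(k+1) ≠ 0 := by positivity
  have h2' : ((2:ℝ))^(k+2) ≠ 0 := by positivity
  rcases d with _|_|_|_|_|_|_|d <;>
    (simp only [m, mZ, castV]
     refine Prod.ext ?_ (Prod.ext ?_ ?_) <;>
       (dsimp only; push_cast; rw [pow_succ ((2:ℝ)) (k+1)]; field_simp; try ring))

lemma ctrN_cast : ∀ k n, ctrN k n = castV (ictr k n) k := by
  intro k
  induction k with
  | zero => intro n; norm_num [ctrN, ictr, castV, ctr0]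
  | succ k ih =>
      intro n
      show m (n / 8^k) (ctrN k (n % 8^k)) = _
      rw [ih, m_scale]
      rfl

lemma abs_coord_le_norm (v z : V) :
    |v.1 - z.1| ≤ ‖v - z‖ ∧ |v.2.1 - z.2.1| ≤ ‖v - z‖ ∧ |v.2.2 - z.2.2| ≤ ‖v - z‖ := by
  rcases v with ⟨a, b, c⟩; rcases z with ⟨a', b', c'⟩
  simp only [Prod.mk_sub_mk]
  rw [norm_def]
  dsimp only
  exact ⟨le_max_left _ _, le_max_of_le_right (le_max_left _ _),
    le_max_of_le_right (le_max_right _ _)⟩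

/-- The key occupation-measure (counting) bound. -/
lemma meas_ball (k : ℕ) (z : V) :
    volume {y : ℝ | y ∈ Ico (0:ℝ) 1 ∧ ‖hfun y - z‖ ≤ (2⁻¹:ℝ)^k} ≤
      512 * ENNReal.ofReal ((8:ℝ)^k)⁻¹ := by
  classical
  set S : Finset ℕ := (Finset.range (8^k)).filter
    (fun n => ‖ctrN k n - z‖ ≤ (2⁻¹:ℝ)^k + (2⁻¹:ℝ)^(k+1)) with hS
  -- covering
  have hcov : {y : ℝ | y ∈ Ico (0:ℝ) 1 ∧ ‖hfun y - z‖ ≤ (2⁻¹:ℝ)^k} ⊆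
      ⋃ n ∈ S, Icc ((n:ℝ)/8^k) (((n:ℝ)+1)/8^k) := by
    intro y hy
    obtain ⟨hy1, hy2⟩ := hy
    have hb := ctr_ball k y hy1
    have hmem : nFun k y ∈ S := by
      rw [hS, Finset.mem_filter]
      refine ⟨Finset.mem_range.mpr (nFun_lt hy1), ?_⟩
      calc ‖ctrN k (nFun k y) - z‖
          ≤ ‖ctrN k (nFun k y) - hfun y‖ + ‖hfun y - z‖ := norm_sub_le_norm_sub_add_norm_sub _ _ _
        _ ≤ (2⁻¹:ℝ)^(k+1) + (2⁻¹:ℝ)^k := by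
            rw [norm_sub_rev] at hb
            linarith
        _ = (2⁻¹:ℝ)^k + (2⁻¹:ℝ)^(k+1) := by ring
    apply mem_biUnion hmem
    obtain ⟨hl, hr⟩ := nFun_bounds (k := k) hy1
    exact ⟨hl, hr⟩
  -- cardinality
  have hcard : S.card ≤ 512 := by
    have hinj : Set.InjOn (fun n => ictr k n) S := by
      intro n₁ h₁ n₂ h₂ he
      have h₁' := Finset.mem_range.mp (Finset.mem_filter.mp h₁).1
      have h₂' := Finset.mem_range.mp (Finset.mem_filter.mp h₂).1
      apply ctrN_inj k n₁ n₂ h₁' h₂'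
      rw [ctrN_cast, ctrN_cast]
      exact congrArg (fun w => castV w k) he
    have hmaps : ∀ n ∈ S, (fun n => ictr k n) n ∈
        (Finset.Icc (⌈(2:ℝ)^(k+1) * z.1⌉ - 4) (⌈(2:ℝ)^(k+1) * z.1⌉ + 3)) ×ˢ
        ((Finset.Icc (⌈(2:ℝ)^(k+1) * z.2.1⌉ - 4) (⌈(2:ℝ)^(k+1) * z.2.1⌉ + 3)) ×ˢ
         (Finset.Icc (⌈(2:ℝ)^(k+1) * z.2.2⌉ - 4) (⌈(2:ℝ)^(k+1) * z.2.2⌉ + 3))) := by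
      intro n hn
      obtain ⟨hn1, hn2⟩ := Finset.mem_filter.mp hn
      have hcst := ctrN_cast k n
      have h32 : (2⁻¹:ℝ)^k + (2⁻¹:ℝ)^(k+1) ≤ 3 * (2⁻¹:ℝ)^(k+1) := by
        rw [pow_succ]; nlinarith [pow_nonneg (show (0:ℝ) ≤ 2⁻¹ by norm_num) k]
      have hb : ‖castV (ictr k n) k - z‖ ≤ 3 * (2⁻¹:ℝ)^(k+1) := by
        rw [← hcst]; linarith
      obtain ⟨hb1, hb2, hb3⟩ := abs_coord_le_norm (castV (ictr k n) k) z
      have hkey : ∀ (w : ℤ) (c : ℝ), |((w:ℝ))/2^(k+1) - c| ≤ 3 * (2⁻¹:ℝ)^(k+1) →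
          w ∈ Finset.Icc (⌈(2:ℝ)^(k+1) * c⌉ - 4) (⌈(2:ℝ)^(k+1) * c⌉ + 3) := by
        intro w c hw
        have hp : (0:ℝ) < 2^(k+1) := by positivity
        have hinv : (2⁻¹:ℝ)^(k+1) = ((2:ℝ)^(k+1))⁻¹ := by
          rw [inv_pow]
        rw [abs_le] at hw
        rw [hinv] at hw
        obtain ⟨hwl, hwr⟩ := hw
        have hT0 : ((2:ℝ)^(k+1)) ≠ 0 := ne_of_gt hp
        have h1 : (w:ℝ) ≤ 2^(k+1) * c + 3 := by
          have h := mul_le_mul_of_nonneg_left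
            (show (w:ℝ)/2^(k+1) - c ≤ 3*((2:ℝ)^(k+1))⁻¹ by linarith) (le_of_lt hp)
          have e1 : (2:ℝ)^(k+1) * ((w:ℝ)/2^(k+1) - c) = (w:ℝ) - 2^(k+1)*c := by
            field_simp
          have e2 : (2:ℝ)^(k+1) * (3*((2:ℝ)^(k+1))⁻¹) = 3 := by field_simp
          rw [e1, e2] at h; linarith
        have h2 : 2^(k+1) * c - 3 ≤ (w:ℝ) := by
          have h := mul_le_mul_of_nonneg_left
            (show -(3*((2:ℝ)^(k+1))⁻¹) ≤ (w:ℝ)/2^(k+1) - c by linarith) (le_of_lt hp)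
          have e1 : (2:ℝ)^(k+1) * ((w:ℝ)/2^(k+1) - c) = (w:ℝ) - 2^(k+1)*c := by
            field_simp
          have e2 : (2:ℝ)^(k+1) * (-(3*((2:ℝ)^(k+1))⁻¹)) = -3 := by
            field_simp
            try ring
          rw [e1, e2] at h; linarith
        rw [Finset.mem_Icc]
        constructor
        · have : ((⌈(2:ℝ)^(k+1) * c⌉ - 4 : ℤ) : ℝ) ≤ (w:ℝ) := by
            push_cast
            linarith [Int.ceil_lt_add_one ((2:ℝ)^(k+1) * c)]
          exact_mod_cast this
        · have : ((w:ℝ)) ≤ ((⌈(2:ℝ)^(k+1) * c⌉ + 3 : ℤ) : ℝ) := by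
            push_cast
            linarith [Int.le_ceil ((2:ℝ)^(k+1) * c)]
          exact_mod_cast this
      exact Finset.mem_product.mpr ⟨hkey _ _ (hb1.trans hb),
        Finset.mem_product.mpr ⟨hkey _ _ (hb2.trans hb), hkey _ _ (hb3.trans hb)⟩⟩
    calc S.card ≤ _ := Finset.card_le_card_of_injOn _ hmaps hinj
      _ ≤ 512 := by
        rw [Finset.card_product, Finset.card_product, Int.card_Icc, Int.card_Icc, Int.card_Icc]
        have e : ∀ a : ℤ, (a + 3 + 1 - (a - 4)).toNat = 8 := by intro a; omega
        rw [e, e, e]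
  -- measure computation
  calc volume {y : ℝ | y ∈ Ico (0:ℝ) 1 ∧ ‖hfun y - z‖ ≤ (2⁻¹:ℝ)^k}
      ≤ volume (⋃ n ∈ S, Icc ((n:ℝ)/8^k) (((n:ℝ)+1)/8^k)) := measure_mono hcov
    _ ≤ ∑ n ∈ S, volume (Icc ((n:ℝ)/8^k) (((n:ℝ)+1)/8^k)) := measure_biUnion_finset_le _ _
    _ = ∑ n ∈ S, ENNReal.ofReal (((8:ℝ)^k)⁻¹) := by
        apply Finset.sum_congr rfl
        intro n _
        rw [Real.volume_Icc]
        congr 1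
        field_simp
        ring
    _ = S.card * ENNReal.ofReal (((8:ℝ)^k)⁻¹) := by
        rw [Finset.sum_const, nsmul_eq_mul]
    _ ≤ 512 * ENNReal.ofReal (((8:ℝ)^k)⁻¹) := by
        apply mul_le_mul_left
        exact_mod_cast Nat.cast_le.mpr hcard

end HilbertAux

-- PART 5 : measurability and energy bound
namespace HilbertAux
open MeasureTheory Set Filter
open scoped ENNReal Topology

lemma measurableSet_digN_eq (i : ℕ) : MeasurableSet {x : ℝ | digN x = i} := by
  rcases Nat.lt_or_ge i 8 with hi | hi
  · rcases Nat.eq_zero_or_pos i with h0 | h0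
    · subst h0
      have : {x : ℝ | digN x = 0} = Iio (8⁻¹ : ℝ) := by
        ext x
        simp only [mem_setOf_eq, mem_Iio]
        constructor
        · intro h
          have h1 : ⌊8 * x⌋ ≤ 0 := by unfold digN at h; omega
          have h2 : 8 * x < 1 := by
            have := Int.floor_lt.mp (show ⌊8*x⌋ < (1:ℤ) by omega)
            simpa using this
          linarith
        · intro h
          have h2 : ⌊8 * x⌋ < (1:ℤ) := Int.floor_lt.mpr (by push_cast; linarith)
          unfold digN; omega
      rw [this]; exact measurableSet_Iio
    · rcases Nat.lt_or_ge i 7 with h7 | h7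
      · -- 1 ≤ i ≤ 6
        have : {x : ℝ | digN x = i} = Ico ((i:ℝ)/8) (((i:ℝ)+1)/8) := by
          ext x
          simp only [mem_setOf_eq, mem_Ico]
          constructor
          · intro h
            have hfl : ⌊8 * x⌋ = (i:ℤ) := by unfold digN at h; omega
            have := Int.floor_eq_iff.mp hfl
            obtain ⟨hl, hr⟩ := this
            push_cast at hl hr
            constructor <;> [linarith; linarith]
          · intro ⟨hl, hr⟩
            have hfl : ⌊8 * x⌋ = (i:ℤ) := by
              apply Int.floor_eq_iff.mpr
              push_cast
              constructor <;> linarith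
            unfold digN; omega
        rw [this]; exact measurableSet_Ico
      · -- i = 7
        have hi7 : i = 7 := by omega
        subst hi7
        have : {x : ℝ | digN x = 7} = Ici ((7:ℝ)/8) := by
          ext x
          simp only [mem_setOf_eq, mem_Ici]
          constructor
          · intro h
            have h7 : (7:ℤ) ≤ ⌊8 * x⌋ := by unfold digN at h; omega
            have := Int.le_floor.mp h7
            push_cast at this
            linarith
          · intro h
            have h7 : (7:ℤ) ≤ ⌊8 * x⌋ := Int.le_floor.mpr (by push_cast; linarith)
            unfold digN; omega
        rw [this]; exact measurableSet_Ici
  · have : {x : ℝ | digN x = i} = ∅ := by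
      ext x
      simp only [mem_setOf_eq, mem_empty_iff_false, iff_false]
      have := digN_le x
      omega
    rw [this]; exact MeasurableSet.empty

lemma measurable_digN : Measurable digN :=
  measurable_to_countable' fun n => by
    have : digN ⁻¹' {n} = {x : ℝ | digN x = n} := by ext x; simp
    rw [this]; exact measurableSet_digN_eq n

lemma measurable_sh : Measurable sh := by
  unfold sh
  exact (measurable_const.mul measurable_id).sub
    ((measurable_from_nat (f := fun n : ℕ => (n : ℝ))).comp measurable_digN)

lemma measurable_Phi (k : ℕ) : Measurable (Phi k) := by
  induction k with
  | zero => exact measurable_const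
  | succ k ih =>
      have hw : Measurable (fun x => Phi k (sh x)) := ih.comp measurable_sh
      have heq : (Phi (k+1)) = fun x =>
          if digN x = 0 then m 0 (Phi k (sh x)) else
          if digN x = 1 then m 1 (Phi k (sh x)) else
          if digN x = 2 then m 2 (Phi k (sh x)) else
          if digN x = 3 then m 3 (Phi k (sh x)) else
          if digN x = 4 then m 4 (Phi k (sh x)) else
          if digN x = 5 then m 5 (Phi k (sh x)) else
          if digN x = 6 then m 6 (Phi k (sh x)) else
            m 7 (Phi k (sh x)) := by
        funext x
        show m (digN x) (Phi k (sh x)) = _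
        have h7 := digN_le x
        set d := digN x with hd
        interval_cases d <;> simp
      rw [heq]
      have hc : ∀ j, Measurable (fun x => m j (Phi k (sh x))) := fun j =>
        (m_lipschitz j).continuous.measurable.comp hw
      refine Measurable.ite (measurableSet_digN_eq 0) (hc 0) ?_
      refine Measurable.ite (measurableSet_digN_eq 1) (hc 1) ?_
      refine Measurable.ite (measurableSet_digN_eq 2) (hc 2) ?_
      refine Measurable.ite (measurableSet_digN_eq 3) (hc 3) ?_
      refine Measurable.ite (measurableSet_digN_eq 4) (hc 4) ?_
      refine Measurable.ite (measurableSet_digN_eq 5) (hc 5) ?_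
      refine Measurable.ite (measurableSet_digN_eq 6) (hc 6) (hc 7)

lemma measurable_hfun : Measurable hfun := by
  apply measurable_of_tendsto_metrizable measurable_Phi
  rw [tendsto_pi_nhds]
  exact hfun_tendsto

/-- clamped curve, defined on all of ℝ -/
def H (x : ℝ) : V := hfun (min 1 (max 0 x))

lemma H_eq {x : ℝ} (hx : x ∈ Icc (0:ℝ) 1) : H x = hfun x := by
  rw [H, max_eq_right hx.1, min_eq_right hx.2]

lemma measurable_H : Measurable H :=
  measurable_hfun.comp ((continuous_const.min (continuous_const.max continuous_id)).measurable)

lemma H_memK (x : ℝ) : inK (H x) := hfun_memK _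

/-- Hölder bound for H on the unit interval -/
lemma H_holder {x y : ℝ} (hx : x ∈ Icc (0:ℝ) 1) (hy : y ∈ Icc (0:ℝ) 1) :
    ‖H x - H y‖ ≤ 4 * |x - y| ^ ((1:ℝ)/3) := by
  rw [H_eq hx, H_eq hy]; exact hfun_holder hx hy

/-- the measure we work with -/
def mu : Measure ℝ := volume.restrict (Icc (0:ℝ) 1)

lemma mu_univ : mu univ = 1 := by
  rw [mu, Measure.restrict_apply_univ, Real.volume_Icc]
  norm_num

/-- band decomposition for small positive reals -/
lemma exists_band {t : ℝ} (h0 : 0 < t) (h1 : t ≤ 2⁻¹) :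
    ∃ k : ℕ, t ≤ (2⁻¹:ℝ)^(k+1) ∧ (2⁻¹:ℝ)^(k+2) < t := by
  classical
  have hex : ∃ n : ℕ, (2⁻¹:ℝ)^n < t := exists_pow_lt_of_lt_one h0 (by norm_num)
  set n₀ := Nat.find hex with hn₀
  have hspec : (2⁻¹:ℝ)^n₀ < t := Nat.find_spec hex
  have hge2 : 2 ≤ n₀ := by
    by_contra hlt
    push_neg at hlt
    interval_cases n₀ <;> [(norm_num at hspec; linarith); (norm_num at hspec; linarith)]
  refine ⟨n₀ - 2, ?_, ?_⟩
  · have hmin : ¬ ((2⁻¹:ℝ)^(n₀-1) < t) := Nat.find_min hex (by omega)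
    push_neg at hmin
    have : n₀ - 2 + 1 = n₀ - 1 := by omega
    rw [this]
    exact hmin
  · have : n₀ - 2 + 2 = n₀ := by omega
    rw [this]
    exact hspec

/-- the sets in the layer-cake decomposition -/
def Aset (z : V) (k : ℕ) : Set ℝ := {y : ℝ | ‖H y - z‖ ≤ (2⁻¹:ℝ)^(k+1)}

lemma measurableSet_Aset (z : V) (k : ℕ) : MeasurableSet (Aset z k) := by
  have : Aset z k = (fun y => ‖H y - z‖) ⁻¹' Iic ((2⁻¹:ℝ)^(k+1)) := rfl
  rw [this]
  exact ((measurable_H.sub measurable_const).norm) measurableSet_Iic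

lemma mu_Aset (z : V) (k : ℕ) :
    mu (Aset z k) ≤ 512 * ENNReal.ofReal (((8:ℝ)^(k+1))⁻¹) := by
  rw [mu, Measure.restrict_apply' measurableSet_Icc]
  have hsub : Aset z k ∩ Icc 0 1 ⊆
      {y : ℝ | y ∈ Ico (0:ℝ) 1 ∧ ‖hfun y - z‖ ≤ (2⁻¹:ℝ)^(k+1)} ∪ {1} := by
    intro y ⟨hyA, hyI⟩
    rcases eq_or_lt_of_le hyI.2 with h1 | h1
    · right; simp [h1]
    · left
      refine ⟨⟨hyI.1, h1⟩, ?_⟩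
      have hHe := H_eq hyI
      rw [← hHe]
      exact hyA
  calc volume (Aset z k ∩ Icc 0 1)
      ≤ volume ({y : ℝ | y ∈ Ico (0:ℝ) 1 ∧ ‖hfun y - z‖ ≤ (2⁻¹:ℝ)^(k+1)} ∪ {1}) :=
        measure_mono hsub
    _ ≤ volume {y : ℝ | y ∈ Ico (0:ℝ) 1 ∧ ‖hfun y - z‖ ≤ (2⁻¹:ℝ)^(k+1)} + volume ({1} : Set ℝ) :=
        measure_union_le _ _
    _ ≤ 512 * ENNReal.ofReal (((8:ℝ)^(k+1))⁻¹) + 0 := by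
        gcongr
        · exact meas_ball (k+1) z
        · simp
    _ = _ := by rw [add_zero]

/-- pointwise layer-cake bound -/
lemma pointwise_bound (z : V) (y : ℝ) :
    ((‖H y - z‖₊ : ℝ≥0∞) ^ 2)⁻¹ ≤
      4 + ∑' k : ℕ, (Aset z k).indicator (fun _ => (4:ℝ≥0∞)^(k+2)) y := by
  have hofr : ENNReal.ofReal (2⁻¹:ℝ) = 2⁻¹ := by
    rw [ENNReal.ofReal_inv_of_pos (by norm_num)]
    norm_num
  set t : ℝ := ‖H y - z‖ with ht
  have ht0 : 0 ≤ t := norm_nonneg _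
  rcases eq_or_lt_of_le ht0 with h0 | h0
  · -- t = 0 : RHS is infinite
    have hall : ∀ k : ℕ, y ∈ Aset z k := by
      intro k
      show ‖H y - z‖ ≤ (2⁻¹:ℝ)^(k+1)
      rw [← ht, ← h0]
      positivity
    have htop : (∑' k : ℕ, (Aset z k).indicator (fun _ => (4:ℝ≥0∞)^(k+2)) y) = ⊤ := by
      rw [tsum_congr (fun k => indicator_of_mem (hall k) _)]
      apply eq_top_iff.mpr
      calc (⊤:ℝ≥0∞) = ∑' _ : ℕ, (1:ℝ≥0∞) :=
            (ENNReal.tsum_const_eq_top_of_ne_zero one_ne_zero).symm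
        _ ≤ _ := ENNReal.tsum_le_tsum (fun k => one_le_pow_of_one_le' (by norm_num) _)
    rw [htop]
    simp
  · rcases le_or_gt t 2⁻¹ with hsm | hbig
    · obtain ⟨k, hk1, hk2⟩ := exists_band h0 hsm
      have hyA : y ∈ Aset z k := hk1
      have hterm : (4:ℝ≥0∞)^(k+2) ≤
          ∑' j : ℕ, (Aset z j).indicator (fun _ => (4:ℝ≥0∞)^(j+2)) y := by
        have h := ENNReal.le_tsum
          (f := fun j : ℕ => (Aset z j).indicator (fun _ => (4:ℝ≥0∞)^(j+2)) y) k
        rwa [indicator_of_mem hyA] at h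
      have hnn : (2⁻¹:ℝ≥0∞)^(k+2) ≤ (‖H y - z‖₊ : ℝ≥0∞) := by
        rw [← enorm_eq_nnnorm, ← ofReal_norm, ← hofr, ← ENNReal.ofReal_pow (by norm_num)]
        exact ENNReal.ofReal_le_ofReal (by rw [← ht]; exact hk2.le)
      have hlhs : ((‖H y - z‖₊ : ℝ≥0∞) ^ 2)⁻¹ ≤ (4:ℝ≥0∞)^(k+2) := by
        calc ((‖H y - z‖₊ : ℝ≥0∞) ^ 2)⁻¹
            ≤ (((2⁻¹:ℝ≥0∞)^(k+2))^2)⁻¹ := ENNReal.inv_le_inv' (pow_le_pow_left' hnn 2)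
          _ = (4:ℝ≥0∞)^(k+2) := by
              rw [← pow_mul, ← ENNReal.inv_pow, inv_inv, mul_comm, pow_mul]
              norm_num
      exact hlhs.trans (le_add_left hterm)
    · -- t > 1/2
      have hnn : (2⁻¹:ℝ≥0∞) ≤ (‖H y - z‖₊ : ℝ≥0∞) := by
        rw [← enorm_eq_nnnorm, ← ofReal_norm, ← hofr]
        exact ENNReal.ofReal_le_ofReal (by rw [← ht]; exact hbig.le)
      have hlhs : ((‖H y - z‖₊ : ℝ≥0∞) ^ 2)⁻¹ ≤ 4 := by
        calc ((‖H y - z‖₊ : ℝ≥0∞) ^ 2)⁻¹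
            ≤ (((2⁻¹:ℝ≥0∞))^2)⁻¹ := ENNReal.inv_le_inv' (pow_le_pow_left' hnn 2)
          _ = 4 := by
              rw [← ENNReal.inv_pow, inv_inv]
              norm_num
      exact hlhs.trans le_self_add

end HilbertAux

-- PART 6 : the energy integral bound
namespace HilbertAux
open MeasureTheory Set Filter
open scoped ENNReal Topology

def Cen : ℝ≥0∞ := 4 + ENNReal.ofReal 2048

lemma Cen_ne_top : Cen ≠ ⊤ := by
  rw [Cen]
  exact ENNReal.add_ne_top.mpr ⟨by norm_num, ENNReal.ofReal_ne_top⟩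

lemma term_eq (k : ℕ) :
    (4:ℝ≥0∞)^(k+2) * (512 * ENNReal.ofReal (((8:ℝ)^(k+1))⁻¹)) =
      ENNReal.ofReal (1024 * (2⁻¹:ℝ)^k) := by
  have h4 : (4:ℝ≥0∞)^(k+2) = ENNReal.ofReal ((4:ℝ)^(k+2)) := by
    rw [ENNReal.ofReal_pow (by norm_num)]
    norm_num
  have h512 : (512:ℝ≥0∞) = ENNReal.ofReal 512 := by norm_num
  rw [h4, h512, ← ENNReal.ofReal_mul (by positivity), ← ENNReal.ofReal_mul (by positivity)]
  congr 1
  have h8 : (8:ℝ)^(k+1) = 8 * (4^k * 2^k) := by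
    rw [pow_succ, show (8:ℝ)^k = 4^k * 2^k from by rw [← mul_pow]; norm_num]
    ring
  rw [inv_pow, pow_succ (4:ℝ) (k+1), pow_succ (4:ℝ) k, h8]
  have h2 : (2:ℝ)^k ≠ 0 := by positivity
  have h4' : (4:ℝ)^k ≠ 0 := by positivity
  field_simp
  ring

lemma tsum_terms :
    (∑' k : ℕ, ENNReal.ofReal (1024 * (2⁻¹:ℝ)^k)) = ENNReal.ofReal 2048 := by
  rw [← ENNReal.ofReal_tsum_of_nonneg (fun k => by positivity)
    ((summable_geometric_of_lt_one (by norm_num) (by norm_num)).mul_left _)]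
  congr 1
  rw [tsum_mul_left, tsum_geometric_of_lt_one (by norm_num) (by norm_num)]
  norm_num

/-- The energy bound: uniform in the center point `z`. -/
lemma energy (z : V) :
    ∫⁻ y, ((‖H y - z‖₊ : ℝ≥0∞) ^ 2)⁻¹ ∂mu ≤ Cen := by
  have hmeasA : ∀ k : ℕ, AEMeasurable
      (fun y => (Aset z k).indicator (fun _ => (4:ℝ≥0∞)^(k+2)) y) mu :=
    fun k => ((measurable_const.indicator (measurableSet_Aset z k))).aemeasurable
  calc ∫⁻ y, ((‖H y - z‖₊ : ℝ≥0∞) ^ 2)⁻¹ ∂mu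
      ≤ ∫⁻ y, (4 + ∑' k : ℕ, (Aset z k).indicator (fun _ => (4:ℝ≥0∞)^(k+2)) y) ∂mu :=
        lintegral_mono (pointwise_bound z)
    _ = ∫⁻ _, (4:ℝ≥0∞) ∂mu +
          ∫⁻ y, ∑' k : ℕ, (Aset z k).indicator (fun _ => (4:ℝ≥0∞)^(k+2)) y ∂mu :=
        lintegral_add_left measurable_const _
    _ = 4 * mu univ + ∑' k : ℕ, ∫⁻ y, (Aset z k).indicator (fun _ => (4:ℝ≥0∞)^(k+2)) y ∂mu := by
        rw [lintegral_const, lintegral_tsum hmeasA]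
    _ = 4 + ∑' k : ℕ, (4:ℝ≥0∞)^(k+2) * mu (Aset z k) := by
        rw [mu_univ, mul_one]
        congr 1
        exact tsum_congr fun k => lintegral_indicator_const (measurableSet_Aset z k) _
    _ ≤ 4 + ∑' k : ℕ, (4:ℝ≥0∞)^(k+2) * (512 * ENNReal.ofReal (((8:ℝ)^(k+1))⁻¹)) := by
        gcongr with k
        exact mu_Aset z k
    _ = 4 + ENNReal.ofReal 2048 := by
        rw [tsum_congr term_eq, tsum_terms]
    _ = Cen := rfl

/-- vanishing of sections of the coincidence set -/
lemma mu_coincide (z : V) : mu {y : ℝ | H y = z} = 0 := by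
  have hsub : ∀ k : ℕ, {y : ℝ | H y = z} ⊆ Aset z k := by
    intro k y hy
    show ‖H y - z‖ ≤ _
    rw [mem_setOf_eq] at hy
    rw [hy, sub_self, norm_zero]
    positivity
  have hbd : ∀ k : ℕ, mu {y : ℝ | H y = z} ≤ 512 * ENNReal.ofReal (((8:ℝ)^(k+1))⁻¹) :=
    fun k => (measure_mono (hsub k)).trans (mu_Aset z k)
  have htend : Tendsto (fun k : ℕ => (512:ℝ≥0∞) * ENNReal.ofReal (((8:ℝ)^(k+1))⁻¹))
      atTop (𝓝 0) := by
    have hreal : Tendsto (fun k : ℕ => ((8:ℝ)^(k+1))⁻¹) atTop (𝓝 0) := by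
      have h1 : Tendsto (fun k : ℕ => ((8:ℝ)⁻¹)^(k+1)) atTop (𝓝 0) :=
        (tendsto_pow_atTop_nhds_zero_of_lt_one (by norm_num) (by norm_num)).comp
          (tendsto_add_atTop_nat 1)
      simpa [inv_pow] using h1
    have h2 : Tendsto (fun k : ℕ => ENNReal.ofReal (((8:ℝ)^(k+1))⁻¹)) atTop (𝓝 0) := by
      have := (ENNReal.continuous_ofReal.tendsto 0).comp hreal
      simpa only [Function.comp_def, ENNReal.ofReal_zero] using this
    have h3 := ENNReal.Tendsto.const_mul h2 (Or.inr (by norm_num : (512:ℝ≥0∞) ≠ ⊤))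
    simpa using h3
  exact le_antisymm
    (le_of_tendsto_of_tendsto' tendsto_const_nhds htend hbd) zero_le

end HilbertAux

-- PART 7 : assembly
namespace HilbertAux
open MeasureTheory Set Filter
open scoped ENNReal NNReal Topology

def f1 : ℝ → ℂ := fun x => ((H x).1 : ℂ) + ((H x).2.1 : ℂ) * Complex.I
def f2 : ℝ → ℂ := fun x => ((H x).2.2 : ℂ)

lemma f1_sub (x y : ℝ) : f1 x - f1 y =
    (((H x).1 - (H y).1 : ℝ) : ℂ) + (((H x).2.1 - (H y).2.1 : ℝ) : ℂ) * Complex.I := by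
  simp only [f1]
  push_cast
  ring

lemma f2_sub (x y : ℝ) : f2 x - f2 y = (((H x).2.2 - (H y).2.2 : ℝ) : ℂ) := by
  simp [f2]

lemma normSq_f1_sub (x y : ℝ) :
    Complex.normSq (f1 x - f1 y) = ((H x).1 - (H y).1)^2 + ((H x).2.1 - (H y).2.1)^2 := by
  rw [f1_sub, Complex.normSq_add_mul_I]

lemma normSq_f2_sub (x y : ℝ) :
    Complex.normSq (f2 x - f2 y) = ((H x).2.2 - (H y).2.2)^2 := by
  rw [f2_sub, Complex.normSq_ofReal, sq]

def Sfn (p : ℝ × ℝ) : ℝ :=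
  Complex.normSq (f1 p.1 - f1 p.2) + Complex.normSq (f2 p.1 - f2 p.2)

lemma Sfn_nonneg (p : ℝ × ℝ) : 0 ≤ Sfn p :=
  add_nonneg (Complex.normSq_nonneg _) (Complex.normSq_nonneg _)

lemma Sfn_expand (p : ℝ × ℝ) : Sfn p =
    ((H p.1).1 - (H p.2).1)^2 + ((H p.1).2.1 - (H p.2).2.1)^2 +
      ((H p.1).2.2 - (H p.2).2.2)^2 := by
  rw [Sfn, normSq_f1_sub, normSq_f2_sub]

lemma Sfn_eq_zero_iff (p : ℝ × ℝ) : Sfn p = 0 ↔ H p.1 = H p.2 := by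
  rw [Sfn_expand]
  have s1 := sq_nonneg ((H p.1).1 - (H p.2).1)
  have s2 := sq_nonneg ((H p.1).2.1 - (H p.2).2.1)
  have s3 := sq_nonneg ((H p.1).2.2 - (H p.2).2.2)
  constructor
  · intro h
    have h1 : (H p.1).1 = (H p.2).1 := by nlinarith [s1, s2, s3]
    have h2 : (H p.1).2.1 = (H p.2).2.1 := by nlinarith [s1, s2, s3]
    have h3 : (H p.1).2.2 = (H p.2).2.2 := by nlinarith [s1, s2, s3]
    exact Prod.ext h1 (Prod.ext h2 h3)
  · intro h
    rw [h]
    ring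

lemma norm_sub_sq_le_Sfn (p : ℝ × ℝ) : ‖H p.1 - H p.2‖^2 ≤ Sfn p := by
  rw [Sfn_expand, norm_def]
  have e1 : (H p.1 - H p.2).1 = (H p.1).1 - (H p.2).1 := rfl
  have e2 : (H p.1 - H p.2).2.1 = (H p.1).2.1 - (H p.2).2.1 := rfl
  have e3 : (H p.1 - H p.2).2.2 = (H p.1).2.2 - (H p.2).2.2 := rfl
  rw [e1, e2, e3]
  rcases max_cases |(H p.1).1 - (H p.2).1| (max |(H p.1).2.1 - (H p.2).2.1|
    |(H p.1).2.2 - (H p.2).2.2|) with ⟨h, _⟩ | ⟨h, _⟩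
  · rw [h, sq_abs]
    nlinarith [sq_nonneg ((H p.1).2.1 - (H p.2).2.1), sq_nonneg ((H p.1).2.2 - (H p.2).2.2)]
  · rw [h]
    rcases max_cases |(H p.1).2.1 - (H p.2).2.1| |(H p.1).2.2 - (H p.2).2.2| with
      ⟨h2, _⟩ | ⟨h2, _⟩
    · rw [h2, sq_abs]
      nlinarith [sq_nonneg ((H p.1).1 - (H p.2).1), sq_nonneg ((H p.1).2.2 - (H p.2).2.2)]
    · rw [h2, sq_abs]
      nlinarith [sq_nonneg ((H p.1).1 - (H p.2).1), sq_nonneg ((H p.1).2.1 - (H p.2).2.1)]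

noncomputable def F1 (p : ℝ × ℝ) : ℂ :=
  if Sfn p = 0 then 0 else (starRingEnd ℂ) (f1 p.1 - f1 p.2) / ((Sfn p : ℝ) : ℂ)

noncomputable def F2 (p : ℝ × ℝ) : ℂ :=
  if Sfn p = 0 then 0 else (starRingEnd ℂ) (f2 p.1 - f2 p.2) / ((Sfn p : ℝ) : ℂ)

lemma measurable_f1 : Measurable f1 := by
  apply Measurable.add
  · exact Complex.measurable_ofReal.comp (measurable_fst.comp measurable_H)
  · exact (Complex.measurable_ofReal.comp
      ((measurable_fst.comp measurable_snd).comp measurable_H)).mul_const _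

lemma measurable_f2 : Measurable f2 :=
  Complex.measurable_ofReal.comp ((measurable_snd.comp measurable_snd).comp measurable_H)

lemma measurable_d1 : Measurable (fun p : ℝ × ℝ => f1 p.1 - f1 p.2) :=
  (measurable_f1.comp measurable_fst).sub (measurable_f1.comp measurable_snd)

lemma measurable_d2 : Measurable (fun p : ℝ × ℝ => f2 p.1 - f2 p.2) :=
  (measurable_f2.comp measurable_fst).sub (measurable_f2.comp measurable_snd)

lemma measurable_normSq : Measurable (Complex.normSq : ℂ → ℝ) := by
  have : (Complex.normSq : ℂ → ℝ) = fun z => z.re^2 + z.im^2 := by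
    funext z
    rw [Complex.normSq_apply]; ring
  rw [this]
  exact (Complex.measurable_re.pow_const 2).add (Complex.measurable_im.pow_const 2)

lemma measurable_Sfn : Measurable Sfn :=
  (measurable_normSq.comp measurable_d1).add (measurable_normSq.comp measurable_d2)

lemma measurable_conj_comp {g : ℝ × ℝ → ℂ} (hg : Measurable g) :
    Measurable (fun p => (starRingEnd ℂ) (g p)) := by
  have he : (fun p : ℝ × ℝ => (starRingEnd ℂ) (g p)) = fun p => star (g p) := by
    funext p
    rw [starRingEnd_apply]
  rw [he]
  exact continuous_star.measurable.comp hg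

lemma measurable_F1 : Measurable F1 := by
  apply Measurable.ite (measurable_Sfn (measurableSet_singleton 0)) measurable_const
  exact (measurable_conj_comp measurable_d1).div (Complex.measurable_ofReal.comp measurable_Sfn)

lemma measurable_F2 : Measurable F2 := by
  apply Measurable.ite (measurable_Sfn (measurableSet_singleton 0)) measurable_const
  exact (measurable_conj_comp measurable_d2).div (Complex.measurable_ofReal.comp measurable_Sfn)

lemma Fbound_aux {p : ℝ × ℝ} {Δ : ℂ} (hle : Complex.normSq Δ ≤ Sfn p) (hz : Sfn p ≠ 0) :
    (‖(starRingEnd ℂ) Δ / ((Sfn p : ℝ) : ℂ)‖) * ‖H p.1 - H p.2‖ ≤ 1 := by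
  have hS0 : 0 < Sfn p := lt_of_le_of_ne (Sfn_nonneg p) (Ne.symm hz)
  have hnorm : ‖(starRingEnd ℂ) Δ / ((Sfn p : ℝ) : ℂ)‖ = ‖Δ‖ / Sfn p := by
    rw [norm_div]
    congr 1
    · exact norm_star Δ
    · rw [Complex.norm_real, Real.norm_eq_abs, abs_of_pos hS0]
  rw [hnorm]
  have hA : ‖Δ‖^2 ≤ Sfn p := by
    rw [← Complex.sq_norm] at hle
    exact hle
  have hB : ‖H p.1 - H p.2‖^2 ≤ Sfn p := norm_sub_sq_le_Sfn p
  rw [div_mul_eq_mul_div, div_le_one hS0]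
  nlinarith [sq_nonneg (‖Δ‖ - ‖H p.1 - H p.2‖), norm_nonneg Δ, norm_nonneg (H p.1 - H p.2)]

lemma F_sq_le {p : ℝ × ℝ} {F : ℂ} (h : ‖F‖ * ‖H p.1 - H p.2‖ ≤ 1) :
    ((‖F‖₊ : ℝ≥0∞))^2 ≤ (((‖H p.1 - H p.2‖₊ : ℝ≥0∞))^2)⁻¹ := by
  rw [ENNReal.le_inv_iff_mul_le, ← mul_pow, ← ENNReal.coe_mul, ← ENNReal.coe_pow]
  have h1 : (‖F‖₊ * ‖H p.1 - H p.2‖₊ : ℝ≥0) ≤ 1 := by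
    rw [← NNReal.coe_le_coe]
    push_cast
    exact h
  have h2 : ((‖F‖₊ * ‖H p.1 - H p.2‖₊ : ℝ≥0))^2 ≤ 1 := pow_le_one' h1 2
  exact_mod_cast h2

lemma F1_sq_le (p : ℝ × ℝ) :
    ((‖F1 p‖₊ : ℝ≥0∞))^2 ≤ (((‖H p.1 - H p.2‖₊ : ℝ≥0∞))^2)⁻¹ := by
  by_cases hz : Sfn p = 0
  · rw [F1, if_pos hz]
    simp
  · rw [F1, if_neg hz]
    exact F_sq_le (Fbound_aux (le_add_of_nonneg_right (Complex.normSq_nonneg _)) hz)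

lemma F2_sq_le (p : ℝ × ℝ) :
    ((‖F2 p‖₊ : ℝ≥0∞))^2 ≤ (((‖H p.1 - H p.2‖₊ : ℝ≥0∞))^2)⁻¹ := by
  by_cases hz : Sfn p = 0
  · rw [F2, if_pos hz]
    simp
  · rw [F2, if_neg hz]
    exact F_sq_le (Fbound_aux (le_add_of_nonneg_left (Complex.normSq_nonneg _)) hz)

lemma eqn {p : ℝ × ℝ} (h : Sfn p ≠ 0) :
    (f1 p.1 - f1 p.2) * F1 p + (f2 p.1 - f2 p.2) * F2 p = 1 := by
  rw [F1, F2, if_neg h, if_neg h]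
  have hc : ((Sfn p : ℝ) : ℂ) ≠ 0 := Complex.ofReal_ne_zero.mpr h
  have e1 : (f1 p.1 - f1 p.2) * ((starRingEnd ℂ) (f1 p.1 - f1 p.2) / ((Sfn p : ℝ) : ℂ)) +
      (f2 p.1 - f2 p.2) * ((starRingEnd ℂ) (f2 p.1 - f2 p.2) / ((Sfn p : ℝ) : ℂ)) =
      ((f1 p.1 - f1 p.2) * (starRingEnd ℂ) (f1 p.1 - f1 p.2) +
        (f2 p.1 - f2 p.2) * (starRingEnd ℂ) (f2 p.1 - f2 p.2)) / ((Sfn p : ℝ) : ℂ) := by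
    ring
  rw [e1, Complex.mul_conj, Complex.mul_conj]
  have e2 : ((Complex.normSq (f1 p.1 - f1 p.2) : ℝ) : ℂ) +
      ((Complex.normSq (f2 p.1 - f2 p.2) : ℝ) : ℂ) = ((Sfn p : ℝ) : ℂ) := by
    rw [Sfn]
    push_cast
    ring
  rw [e2, div_self hc]

/-- the product measure -/
def mu2 : Measure (ℝ × ℝ) := mu.prod mu

instance : SigmaFinite mu := by unfold mu; infer_instance
instance : SFinite mu := by unfold mu; infer_instance

lemma null_coincide : mu2 {p : ℝ × ℝ | H p.1 = H p.2} = 0 := by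
  have hD : MeasurableSet {p : ℝ × ℝ | H p.1 = H p.2} := by
    have : {p : ℝ × ℝ | H p.1 = H p.2} =
        (fun p : ℝ × ℝ => H p.1 - H p.2) ⁻¹' {0} := by
      ext p
      simp [sub_eq_zero]
    rw [this]
    exact ((measurable_H.comp measurable_fst).sub (measurable_H.comp measurable_snd))
      (measurableSet_singleton 0)
  rw [mu2, Measure.prod_apply hD]
  have hsec : ∀ x : ℝ, mu (Prod.mk x ⁻¹' {p : ℝ × ℝ | H p.1 = H p.2}) = 0 := by
    intro x
    have : Prod.mk x ⁻¹' {p : ℝ × ℝ | H p.1 = H p.2} = {y : ℝ | H y = H x} := by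
      ext y
      simp [eq_comm]
    rw [this]
    exact mu_coincide (H x)
  rw [lintegral_congr hsec, lintegral_zero]

lemma null_S : mu2 {p : ℝ × ℝ | Sfn p = 0} = 0 := by
  apply measure_mono_null _ null_coincide
  intro p hp
  exact (Sfn_eq_zero_iff p).mp hp

lemma measurable_G : Measurable (fun p : ℝ × ℝ =>
    (((‖H p.1 - H p.2‖₊ : ℝ≥0∞))^2)⁻¹) := by
  apply Measurable.inv
  apply Measurable.pow_const
  exact ((measurable_H.comp measurable_fst).sub (measurable_H.comp measurable_snd)).nnnorm.coe_nnreal_ennreal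

lemma lint_G_le : ∫⁻ p, (((‖H p.1 - H p.2‖₊ : ℝ≥0∞))^2)⁻¹ ∂mu2 ≤ Cen := by
  rw [mu2, lintegral_prod _ measurable_G.aemeasurable]
  calc ∫⁻ x, ∫⁻ y, (((‖H x - H y‖₊ : ℝ≥0∞))^2)⁻¹ ∂mu ∂mu
      ≤ ∫⁻ _, Cen ∂mu := by
        apply lintegral_mono
        intro x
        dsimp only
        have hcg : ∀ y : ℝ, (((‖H x - H y‖₊ : ℝ≥0∞))^2)⁻¹ = (((‖H y - H x‖₊ : ℝ≥0∞))^2)⁻¹ := by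
          intro y
          rw [show ‖H x - H y‖₊ = ‖H y - H x‖₊ from by rw [← nnnorm_neg, neg_sub]]
        rw [lintegral_congr hcg]
        exact energy (H x)
    _ = Cen := by rw [lintegral_const, mu_univ, mul_one]

lemma memL2_of_sq_le {F : ℝ × ℝ → ℂ} (hm : Measurable F)
    (hb : ∀ p, ((‖F p‖₊ : ℝ≥0∞))^2 ≤ (((‖H p.1 - H p.2‖₊ : ℝ≥0∞))^2)⁻¹) :
    MemLp F 2 mu2 := by
  refine ⟨hm.aestronglyMeasurable, ?_⟩
  rw [eLpNorm_eq_lintegral_rpow_enorm_toReal (by norm_num) (by norm_num)]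
  have htr : ((2:ℝ≥0∞)).toReal = ((2:ℕ):ℝ) := by simp
  rw [htr]
  have hpow : ∀ p : ℝ × ℝ, ((‖F p‖₊ : ℝ≥0∞)) ^ ((2:ℕ):ℝ) = ((‖F p‖₊ : ℝ≥0∞))^(2:ℕ) := by
    intro p
    rw [ENNReal.rpow_natCast]
  have h1 : ∫⁻ p, ((‖F p‖₊ : ℝ≥0∞)) ^ ((2:ℕ):ℝ) ∂mu2 ≤ Cen := by
    calc ∫⁻ p, ((‖F p‖₊ : ℝ≥0∞)) ^ ((2:ℕ):ℝ) ∂mu2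
        = ∫⁻ p, ((‖F p‖₊ : ℝ≥0∞))^(2:ℕ) ∂mu2 := lintegral_congr hpow
      _ ≤ ∫⁻ p, (((‖H p.1 - H p.2‖₊ : ℝ≥0∞))^2)⁻¹ ∂mu2 := lintegral_mono hb
      _ ≤ Cen := lint_G_le
  calc (∫⁻ p, ((‖F p‖₊ : ℝ≥0∞)) ^ ((2:ℕ):ℝ) ∂mu2) ^ (1/((2:ℕ):ℝ))
      ≤ Cen ^ (1/((2:ℕ):ℝ)) := ENNReal.rpow_le_rpow h1 (by norm_num)
    _ < ⊤ := ENNReal.rpow_lt_top_of_nonneg (by norm_num) Cen_ne_top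

end HilbertAux

-- PART 8 : the main theorem
open MeasureTheory HilbertAux Set
open scoped ENNReal

/-- There exist functions `f₁, f₂ : [0,1] → ℂ` which are Hölder continuous with exponent
`1/3` and functions `F₁, F₂ ∈ L²([0,1]²)` such that
`(f₁ x - f₁ y) F₁ (x,y) + (f₂ x - f₂ y) F₂ (x,y) = 1` almost everywhere. -/
theorem exists_lipThird_L2_solution :
    ∃ (f₁ f₂ : ℝ → ℂ) (F₁ F₂ : ℝ × ℝ → ℂ),
      (∃ C : ℝ, ∀ x ∈ Set.Icc (0 : ℝ) 1, ∀ y ∈ Set.Icc (0 : ℝ) 1,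
        ‖f₁ x - f₁ y‖ ≤ C * |x - y| ^ ((1 : ℝ) / 3)) ∧
      (∃ C : ℝ, ∀ x ∈ Set.Icc (0 : ℝ) 1, ∀ y ∈ Set.Icc (0 : ℝ) 1,
        ‖f₂ x - f₂ y‖ ≤ C * |x - y| ^ ((1 : ℝ) / 3)) ∧
      MemLp F₁ 2 ((volume.restrict (Set.Icc (0 : ℝ) 1)).prod
        (volume.restrict (Set.Icc (0 : ℝ) 1))) ∧
      MemLp F₂ 2 ((volume.restrict (Set.Icc (0 : ℝ) 1)).prod
        (volume.restrict (Set.Icc (0 : ℝ) 1))) ∧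
      (∀ᵐ p ∂((volume.restrict (Set.Icc (0 : ℝ) 1)).prod
          (volume.restrict (Set.Icc (0 : ℝ) 1))),
        (f₁ p.1 - f₁ p.2) * F₁ p + (f₂ p.1 - f₂ p.2) * F₂ p = 1) := by
  classical
  have hmeq : ((volume.restrict (Set.Icc (0 : ℝ) 1)).prod
      (volume.restrict (Set.Icc (0 : ℝ) 1))) = mu2 := rfl
  refine ⟨f1, f2, F1, F2, ⟨8, ?_⟩, ⟨8, ?_⟩, ?_, ?_, ?_⟩
  · -- Hölder for f1
    intro x hx y hy
    have hH := H_holder hx hy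
    have hc := abs_coord_le_norm (H x) (H y)
    have h1 := hc.1
    have h2 := hc.2.1
    have hre : ((((H x).1 - (H y).1 : ℝ) : ℂ) +
        (((H x).2.1 - (H y).2.1 : ℝ) : ℂ) * Complex.I).re = (H x).1 - (H y).1 := by simp
    have him : ((((H x).1 - (H y).1 : ℝ) : ℂ) +
        (((H x).2.1 - (H y).2.1 : ℝ) : ℂ) * Complex.I).im = (H x).2.1 - (H y).2.1 := by simp
    rw [f1_sub]
    calc ‖_‖ ≤ |(H x).1 - (H y).1| + |(H x).2.1 - (H y).2.1| := by
          have := Complex.norm_le_abs_re_add_abs_im ((((H x).1 - (H y).1 : ℝ) : ℂ) +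
            (((H x).2.1 - (H y).2.1 : ℝ) : ℂ) * Complex.I)
          rwa [hre, him] at this
      _ ≤ 8 * |x - y| ^ ((1 : ℝ) / 3) := by linarith
  · -- Hölder for f2
    intro x hx y hy
    have hH := H_holder hx hy
    have h3 := (abs_coord_le_norm (H x) (H y)).2.2
    have hrp : (0:ℝ) ≤ |x - y| ^ ((1 : ℝ) / 3) := Real.rpow_nonneg (abs_nonneg _) _
    rw [f2_sub, Complex.norm_real, Real.norm_eq_abs]
    linarith
  · rw [hmeq]
    exact memL2_of_sq_le measurable_F1 F1_sq_le
  · rw [hmeq]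
    exact memL2_of_sq_le measurable_F2 F2_sq_le
  · rw [hmeq]
    rw [ae_iff]
    apply measure_mono_null _ null_S
    intro p hp
    simp only [Set.mem_setOf_eq] at hp ⊢
    by_contra h
    exact hp (eqn h)
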